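/- Let X be a finite set with |X| = m, P a probability distribution on X with full support, and G* : X → {1,…,m} a bijection such that G*(x) < G*(y) implies P(x) ≥ P(y) (guessing in non-increasing order of probabilities). Then for any ρ > 0 and α = 1/(1+ρ), (1/ρ)·log(∑_x P(x)·G*(x)^ρ) ≤ H_α(P), where H_α(P) = (1/(1-α)) log ∑_x P(x)^α with base-2 logarithm. -/

import Mathlib

open Real Finset

theorem stmt10 {X : Type*} [Fintype X]
    (m : ℕ) (hm : Fintype.card X = m)
    (P : X → ℝ) (hP : ∀ x, 0 < P x) (hPsum : ∑ x, P x = 1)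
    (G : X → ℕ) (hGmem : ∀ x, G x ∈ Finset.Icc 1 m)
    (hGinj : Function.Injective G)
    (hGmono : ∀ x y, G x < G y → P y ≤ P x)
    (ρ : ℝ) (hρ : 0 < ρ) (α : ℝ) (hα : α = 1 / (1 + ρ)) :
    (1 / ρ) * Real.logb 2 (∑ x, P x * (G x : ℝ) ^ ρ) ≤
      (1 / (1 - α)) * Real.logb 2 (∑ x, P x ^ α) := by
  subst hα
  have h1ρ : (0:ℝ) < 1 + ρ := by linarith
  set a : ℝ := 1 / (1 + ρ) with ha
  have ha0 : 0 < a := by positivity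
  have haρ : a + a * ρ = 1 := by rw [ha]; field_simp
  rcases isEmpty_or_nonempty X with hX | hX
  · simp [Finset.univ_eq_empty]
  set S : ℝ := ∑ x, P x ^ a with hSdef
  have hS0 : 0 < S :=
    Finset.sum_pos (fun x _ => Real.rpow_pos_of_pos (hP x) _) Finset.univ_nonempty
  have hGpos : ∀ x : X, 0 < (G x : ℝ) := by
    intro x
    have := (Finset.mem_Icc.mp (hGmem x)).1
    exact_mod_cast this
  -- G is surjective onto Icc 1 m
  have himg : Finset.image G Finset.univ = Finset.Icc 1 m := by
    apply Finset.eq_of_subset_of_card_le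
    · intro n hn
      obtain ⟨x, -, rfl⟩ := Finset.mem_image.mp hn
      exact hGmem x
    · rw [Finset.card_image_of_injective _ hGinj, Finset.card_univ, hm, Nat.card_Icc]
      omega
  have hcard : ∀ x : X, (Finset.univ.filter (fun y => G y ≤ G x)).card = G x := by
    intro x
    have himg2 : Finset.image G (Finset.univ.filter (fun y => G y ≤ G x)) =
        Finset.Icc 1 (G x) := by
      ext n
      simp only [Finset.mem_image, Finset.mem_filter, Finset.mem_univ, true_and,
        Finset.mem_Icc]
      constructor
      · rintro ⟨y, hy, rfl⟩
        exact ⟨(Finset.mem_Icc.mp (hGmem y)).1, hy⟩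
      · rintro ⟨h1, h2⟩
        have hn : n ∈ Finset.image G Finset.univ := by
          rw [himg, Finset.mem_Icc]
          exact ⟨h1, le_trans h2 (Finset.mem_Icc.mp (hGmem x)).2⟩
        obtain ⟨y, -, rfl⟩ := Finset.mem_image.mp hn
        exact ⟨y, h2, rfl⟩
    calc (Finset.univ.filter (fun y => G y ≤ G x)).card
        = (Finset.image G (Finset.univ.filter (fun y => G y ≤ G x))).card :=
          (Finset.card_image_of_injective _ hGinj).symm
      _ = G x := by rw [himg2, Nat.card_Icc]; omega
  have hkey : ∀ x, (G x : ℝ) * P x ^ a ≤ S := by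
    intro x
    have h1 : (G x : ℝ) * P x ^ a =
        ∑ _y ∈ Finset.univ.filter (fun y => G y ≤ G x), P x ^ a := by
      rw [Finset.sum_const, hcard x, nsmul_eq_mul]
    rw [h1]
    refine le_trans (Finset.sum_le_sum ?_)
      (Finset.sum_le_sum_of_subset_of_nonneg (Finset.subset_univ _) ?_)
    · intro y hy
      simp only [Finset.mem_filter, Finset.mem_univ, true_and] at hy
      rcases lt_or_eq_of_le hy with h | h
      · exact Real.rpow_le_rpow (hP x).le (hGmono y x h) ha0.le
      · exact le_of_eq (by rw [hGinj h])
    · intro y _ _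
      exact (Real.rpow_pos_of_pos (hP y) _).le
  have hterm : ∀ x, P x * (G x : ℝ) ^ ρ ≤ S ^ ρ * P x ^ a := by
    intro x
    have hPa : (0:ℝ) < P x ^ a := Real.rpow_pos_of_pos (hP x) _
    have h2 : (G x : ℝ) ≤ S / P x ^ a := (le_div_iff₀ hPa).mpr (hkey x)
    have h3 : (G x : ℝ) ^ ρ ≤ (S / P x ^ a) ^ ρ :=
      Real.rpow_le_rpow (hGpos x).le h2 hρ.le
    have h4 : P x ^ a = P x / P x ^ (a * ρ) := by
      rw [eq_div_iff (Real.rpow_pos_of_pos (hP x) _).ne', ← Real.rpow_add (hP x), haρ,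
        Real.rpow_one]
    calc P x * (G x : ℝ) ^ ρ ≤ P x * (S / P x ^ a) ^ ρ :=
          mul_le_mul_of_nonneg_left h3 (hP x).le
      _ = S ^ ρ * P x ^ a := by
          rw [Real.div_rpow hS0.le hPa.le, ← Real.rpow_mul (hP x).le, h4]
          ring
  have hsum : ∑ x, P x * (G x : ℝ) ^ ρ ≤ S ^ (1 + ρ) := by
    calc ∑ x, P x * (G x : ℝ) ^ ρ ≤ ∑ x, S ^ ρ * P x ^ a :=
          Finset.sum_le_sum (fun x _ => hterm x)
      _ = S ^ ρ * S := by rw [← Finset.mul_sum]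
      _ = S ^ (1 + ρ) := by rw [Real.rpow_add hS0, Real.rpow_one]; ring
  have hL0 : 0 < ∑ x, P x * (G x : ℝ) ^ ρ :=
    Finset.sum_pos (fun x _ => mul_pos (hP x) (Real.rpow_pos_of_pos (hGpos x) _))
      Finset.univ_nonempty
  have hlog : Real.logb 2 (∑ x, P x * (G x : ℝ) ^ ρ) ≤ (1 + ρ) * Real.logb 2 S := by
    have h5 : Real.logb 2 (∑ x, P x * (G x : ℝ) ^ ρ) ≤ Real.logb 2 (S ^ (1 + ρ)) :=
      Real.logb_le_logb_of_le one_lt_two hL0 hsum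
    calc Real.logb 2 (∑ x, P x * (G x : ℝ) ^ ρ) ≤ Real.logb 2 (S ^ (1 + ρ)) := h5
      _ = (1 + ρ) * Real.logb 2 S := by
          simp [Real.logb, Real.log_rpow hS0, mul_div_assoc]
  have hcoef : (1 / ρ) * (1 + ρ) = 1 / (1 - a) := by
    rw [ha]
    field_simp
    rw [add_sub_cancel_left, div_self hρ.ne']
  calc (1 / ρ) * Real.logb 2 (∑ x, P x * (G x : ℝ) ^ ρ)
      ≤ (1 / ρ) * ((1 + ρ) * Real.logb 2 S) := by
        apply mul_le_mul_of_nonneg_left hlog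
        positivity
    _ = (1 / (1 - a)) * Real.logb 2 S := by rw [← mul_assoc, hcoef]
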